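/- Let M ≥ 2 be an integer and let P, f, T, Δ, R > 0 be real numbers. Set c' = ((M−1)Δ + (M+1)R)/(2M) and x = sqrt((M−1)·T/(f·c')). Then (x/T)·c' + ln(1 + ((M−1)·P/M) / (1 + f·x·P/M)) ≤ 2·sqrt((M−1)·c'/(f·T)). (Theorem 6: the spectral efficiency loss of sequential beamforming with open-loop training, evaluated at the approximately optimal training duration, is at most 2·sqrt((M−1)·[((M−1)/(2M))Δ + ((M+1)/(2M))R]/(f·T)).) -/

import Mathlib

open Real

/-- Theorem 6 of the paper: the spectral efficiency loss of sequential beamforming with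
open-loop training, evaluated at the approximately optimal training duration, is at most
`2 * sqrt((M-1) * c' / (f*T))` with `c' = ((M-1)Δ + (M+1)R)/(2M)`. -/
theorem SE_loss_seqbf_open
    (M : ℕ) (hM : 2 ≤ M) (P f T Δ R : ℝ)
    (hP : 0 < P) (hf : 0 < f) (hT : 0 < T) (hΔ : 0 < Δ) (hR : 0 < R)
    (c' : ℝ) (hc' : c' = (((M : ℝ) - 1) * Δ + ((M : ℝ) + 1) * R) / (2 * (M : ℝ)))
    (x : ℝ) (hx : x = Real.sqrt (((M : ℝ) - 1) * T / (f * c'))) :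
    (x / T) * c' +
      Real.log (1 + (((M : ℝ) - 1) * P / (M : ℝ)) / (1 + f * x * P / (M : ℝ)))
      ≤ 2 * Real.sqrt (((M : ℝ) - 1) * c' / (f * T)) := by
  have hM2 : (2:ℝ) ≤ (M:ℝ) := by exact_mod_cast hM
  have hm : 0 < (M:ℝ) - 1 := by linarith
  have hMpos : 0 < (M:ℝ) := by linarith
  have hc'pos : 0 < c' := by
    rw [hc']
    apply div_pos; nlinarith; linarith
  have hA : 0 < ((M:ℝ) - 1) * T / (f * c') := by positivity
  have hxpos : 0 < x := hx ▸ Real.sqrt_pos.mpr hA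
  have hx2 : x ^ 2 = ((M:ℝ) - 1) * T / (f * c') := by
    rw [hx, Real.sq_sqrt hA.le]
  set s := Real.sqrt (((M:ℝ) - 1) * c' / (f * T)) with hs
  have h1 : x / T * c' = s := by
    have hsq : (x / T * c') ^ 2 = ((M:ℝ) - 1) * c' / (f * T) := by
      have hx2' : x ^ 2 * (f * c') = ((M:ℝ) - 1) * T := by
        field_simp at hx2; linarith
      field_simp
      linear_combination hx2'
    rw [hs, ← hsq, Real.sqrt_sq (by positivity)]
  have h2 : ((M:ℝ) - 1) / (f * x) = s := by
    have hsq : (((M:ℝ) - 1) / (f * x)) ^ 2 = ((M:ℝ) - 1) * c' / (f * T) := by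
      have hx2' : x ^ 2 * (f * c') = ((M:ℝ) - 1) * T := by
        field_simp at hx2; linarith
      field_simp
      linear_combination (-1) * hx2'
    rw [hs, ← hsq, Real.sqrt_sq (by positivity)]
  have hb : 0 < 1 + f * x * P / (M:ℝ) := by positivity
  have ha : 0 ≤ ((M:ℝ) - 1) * P / (M:ℝ) := by positivity
  have hlog : Real.log (1 + (((M:ℝ) - 1) * P / (M:ℝ)) / (1 + f * x * P / (M:ℝ)))
      ≤ (((M:ℝ) - 1) * P / (M:ℝ)) / (1 + f * x * P / (M:ℝ)) := by
    have hpos : 0 < 1 + (((M:ℝ) - 1) * P / (M:ℝ)) / (1 + f * x * P / (M:ℝ)) := by positivity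
    have := Real.log_le_sub_one_of_pos hpos
    linarith
  have hfrac : (((M:ℝ) - 1) * P / (M:ℝ)) / (1 + f * x * P / (M:ℝ)) ≤ ((M:ℝ) - 1) / (f * x) := by
    rw [div_le_div_iff₀ hb (by positivity)]
    have h := mul_pos hf hxpos
    field_simp
    nlinarith [mul_pos (mul_pos hm hMpos) hMpos]
  have : x / T * c' + Real.log (1 + (((M:ℝ) - 1) * P / (M:ℝ)) / (1 + f * x * P / (M:ℝ)))
      ≤ s + s := by
    rw [← h1]
    have := hfrac.trans_eq h2
    linarith
  linarith
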